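/- arXiv:1910.05796 — 3 statements merged into one kernel-verified Lean document; each statement's English description precedes it below -/
import Mathlib

section
/- The constant C(κ) = Γ(4/κ)·Γ(12/κ - 1) / (Γ(8/κ)·Γ(8/κ - 1)), defined as the reciprocal of the Gauss hypergeometric value ₂F₁(4/κ, 1-4/κ, 8/κ; 1), satisfies: C(κ) > 1 for κ ∈ (0,4), C(4) = 1, C(κ) ∈ (0,1) for κ ∈ (4,8), and C(8) = 0. -/
open Real MeasureTheory Set intervalIntegral


-- pointwise cast of the beta integrand
lemma cast_beta_integrand {u v x : ℝ} (hx0 : 0 ≤ x) (hx1 : x ≤ 1) :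
    (x : ℂ) ^ ((u : ℂ) - 1) * (1 - (x : ℂ)) ^ ((v : ℂ) - 1)
      = ((x ^ (u - 1) * (1 - x) ^ (v - 1) : ℝ) : ℂ) := by
  have h1 : (0:ℝ) ≤ 1 - x := by linarith
  rw [Complex.ofReal_mul, Complex.ofReal_cpow hx0, Complex.ofReal_cpow h1]
  push_cast
  ring_nf

lemma beta_integrable {u v : ℝ} (hu : 0 < u) (hv : 0 < v) :
    IntervalIntegrable (fun t : ℝ => t ^ (u - 1) * (1 - t) ^ (v - 1)) volume 0 1 := by
  have hc := Complex.betaIntegral_convergent (u := (u:ℂ)) (v := (v:ℂ))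
    (by simpa using hu) (by simpa using hv)
  rw [intervalIntegrable_iff] at hc ⊢
  have hre := hc.re
  refine hre.congr ?_
  refine ((ae_restrict_mem measurableSet_uIoc).mono ?_)
  intro x hx
  have hx' : x ∈ Set.Ioc (0:ℝ) 1 := by
    simpa [Set.uIoc_of_le (by norm_num : (0:ℝ) ≤ 1)] using hx
  simp [cast_beta_integrand hx'.1.le hx'.2]

lemma beta_repr {u v : ℝ} (hu : 0 < u) (hv : 0 < v) :
    Real.Gamma u * Real.Gamma v
      = Real.Gamma (u + v) * ∫ t in (0:ℝ)..1, t ^ (u - 1) * (1 - t) ^ (v - 1) := by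
  have h := Complex.Gamma_mul_Gamma_eq_betaIntegral (s := (u:ℂ)) (t := (v:ℂ))
    (by simpa using hu) (by simpa using hv)
  rw [Complex.betaIntegral] at h
  have hint : (∫ x in (0:ℝ)..1, (x : ℂ) ^ ((u:ℂ) - 1) * (1 - (x:ℂ)) ^ ((v:ℂ) - 1))
      = ((∫ t in (0:ℝ)..1, t ^ (u - 1) * (1 - t) ^ (v - 1) : ℝ) : ℂ) := by
    have step1 : (∫ x in (0:ℝ)..1, (x : ℂ) ^ ((u:ℂ) - 1) * (1 - (x:ℂ)) ^ ((v:ℂ) - 1))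
        = ∫ x in (0:ℝ)..1, ((x ^ (u - 1) * (1 - x) ^ (v - 1) : ℝ) : ℂ) := by
      refine intervalIntegral.integral_congr fun x hx => ?_
      have hx' : x ∈ Set.Icc (0:ℝ) 1 := by
        simpa [Set.uIcc_of_le (by norm_num : (0:ℝ) ≤ 1)] using hx
      exact (cast_beta_integrand hx'.1 hx'.2)
    rw [step1]
    exact RCLike.intervalIntegral_ofReal
  rw [hint] at h
  have : ((Real.Gamma u * Real.Gamma v : ℝ) : ℂ)
      = ((Real.Gamma (u+v) * ∫ t in (0:ℝ)..1, t ^ (u - 1) * (1 - t) ^ (v - 1) : ℝ) : ℂ) := by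
    push_cast
    rw [← Complex.Gamma_ofReal, ← Complex.Gamma_ofReal, ← Complex.Gamma_ofReal] at *
    simpa using h
  exact_mod_cast this

-- sqrt identity: geometric mean of the two integrand values is the midpoint integrand
lemma gm_eq {a b t : ℝ} (ht0 : 0 < t) (ht1 : t < 1) :
    (t ^ (a - 1) * (1 - t) ^ (b - 1)) * (t ^ (b - 1) * (1 - t) ^ (a - 1))
      = (t ^ ((a + b) / 2 - 1) * (1 - t) ^ ((a + b) / 2 - 1))
        * (t ^ ((a + b) / 2 - 1) * (1 - t) ^ ((a + b) / 2 - 1)) := by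
  have h1t : (0:ℝ) < 1 - t := by linarith
  have e1 : t ^ (a - 1) * t ^ (b - 1) = t ^ ((a+b)/2 - 1) * t ^ ((a+b)/2 - 1) := by
    rw [← Real.rpow_add ht0, ← Real.rpow_add ht0]; ring_nf
  have e2 : (1-t) ^ (a - 1) * (1-t) ^ (b - 1)
      = (1-t) ^ ((a+b)/2 - 1) * (1-t) ^ ((a+b)/2 - 1) := by
    rw [← Real.rpow_add h1t, ← Real.rpow_add h1t]; ring_nf
  calc (t ^ (a - 1) * (1 - t) ^ (b - 1)) * (t ^ (b - 1) * (1 - t) ^ (a - 1))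
      = (t ^ (a - 1) * t ^ (b - 1)) * ((1-t) ^ (a - 1) * (1-t) ^ (b - 1)) := by ring
    _ = (t ^ ((a+b)/2 - 1) * t ^ ((a+b)/2 - 1))
        * ((1-t) ^ ((a+b)/2 - 1) * (1-t) ^ ((a+b)/2 - 1)) := by rw [e1, e2]
    _ = _ := by ring

lemma amgm_le {a b t : ℝ} (ht0 : 0 < t) (ht1 : t < 1) :
    2 * (t ^ ((a + b) / 2 - 1) * (1 - t) ^ ((a + b) / 2 - 1))
      ≤ t ^ (a - 1) * (1 - t) ^ (b - 1) + t ^ (b - 1) * (1 - t) ^ (a - 1) := by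
  have h1t : (0:ℝ) < 1 - t := by linarith
  set p := t ^ (a - 1) * (1 - t) ^ (b - 1) with hp
  set q := t ^ (b - 1) * (1 - t) ^ (a - 1) with hq
  set h := t ^ ((a+b)/2 - 1) * (1 - t) ^ ((a+b)/2 - 1) with hh
  have hppos : 0 < p := by positivity
  have hqpos : 0 < q := by positivity
  have hhpos : 0 < h := by positivity
  have hpq : p * q = h * h := gm_eq ht0 ht1
  nlinarith [sq_nonneg (p - q), sq_nonneg (p + q)]

lemma amgm_lt {a b t : ℝ} (hab : a < b) (ht0 : 0 < t) (ht2 : t < 1/2) :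
    2 * (t ^ ((a + b) / 2 - 1) * (1 - t) ^ ((a + b) / 2 - 1))
      < t ^ (a - 1) * (1 - t) ^ (b - 1) + t ^ (b - 1) * (1 - t) ^ (a - 1) := by
  have ht1 : t < 1 := by linarith
  have h1t : (0:ℝ) < 1 - t := by linarith
  set p := t ^ (a - 1) * (1 - t) ^ (b - 1) with hp
  set q := t ^ (b - 1) * (1 - t) ^ (a - 1) with hq
  set h := t ^ ((a+b)/2 - 1) * (1 - t) ^ ((a+b)/2 - 1) with hh
  have hppos : 0 < p := by positivity
  have hqpos : 0 < q := by positivity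
  have hhpos : 0 < h := by positivity
  have hpq : p * q = h * h := gm_eq ht0 ht1
  have hne : p ≠ q := by
    intro heq
    have key : t ^ (b - a) < (1 - t) ^ (b - a) :=
      Real.rpow_lt_rpow ht0.le (by linarith) (by linarith)
    have c1 : p * (t ^ (1 - a) * (1 - t) ^ (1 - b)) = 1 := by
      rw [hp]
      have : t ^ (a-1) * (1-t) ^ (b-1) * (t ^ (1-a) * (1-t) ^ (1-b))
          = (t ^ (a-1) * t ^ (1-a)) * ((1-t) ^ (b-1) * (1-t) ^ (1-b)) := by ring
      rw [this, ← Real.rpow_add ht0, ← Real.rpow_add h1t]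
      norm_num
    have c2 : q * (t ^ (1 - a) * (1 - t) ^ (1 - b)) = t ^ (b-a) * (1-t) ^ (a-b) := by
      rw [hq]
      have : t ^ (b-1) * (1-t) ^ (a-1) * (t ^ (1-a) * (1-t) ^ (1-b))
          = (t ^ (b-1) * t ^ (1-a)) * ((1-t) ^ (a-1) * (1-t) ^ (1-b)) := by ring
      rw [this, ← Real.rpow_add ht0, ← Real.rpow_add h1t]
      ring_nf
    rw [heq, c2] at c1
    have hab' : (1-t) ^ (a-b) = ((1-t) ^ (b-a))⁻¹ := by
      rw [← Real.rpow_neg h1t.le]; ring_nf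
    rw [hab'] at c1
    have hbpos : (0:ℝ) < (1-t) ^ (b-a) := Real.rpow_pos_of_pos h1t _
    have : t ^ (b-a) = (1-t) ^ (b-a) := by
      field_simp at c1
      linarith
    linarith [key]
  nlinarith [sq_nonneg (p - q), sq_pos_of_ne_zero (sub_ne_zero.mpr hne)]


lemma gamma_midpoint_lt {a b : ℝ} (ha : 0 < a) (hab : a < b) :
    Real.Gamma ((a + b) / 2) ^ 2 < Real.Gamma a * Real.Gamma b := by
  have hb : 0 < b := lt_trans ha hab
  have hm : 0 < (a + b) / 2 := by linarith
  -- the three integrands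
  set f : ℝ → ℝ := fun t => t ^ (a - 1) * (1 - t) ^ (b - 1) with hf
  set g : ℝ → ℝ := fun t => t ^ (b - 1) * (1 - t) ^ (a - 1) with hg
  set h : ℝ → ℝ := fun t => t ^ ((a+b)/2 - 1) * (1 - t) ^ ((a+b)/2 - 1) with hh
  have hfint : IntervalIntegrable f volume 0 1 := beta_integrable ha hb
  have hgint : IntervalIntegrable g volume 0 1 := beta_integrable hb ha
  have hhint : IntervalIntegrable h volume 0 1 := beta_integrable hm hm
  -- reflection: ∫ g = ∫ f
  have hrefl : (∫ t in (0:ℝ)..1, g t) = ∫ t in (0:ℝ)..1, f t := by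
    have h0 := intervalIntegral.integral_comp_sub_left (a := (0:ℝ)) (b := 1) f 1
    rw [sub_self, sub_zero] at h0
    rw [← h0]
    refine intervalIntegral.integral_congr fun x hx => ?_
    simp only [hf, hg, sub_sub_cancel]
    ring
  -- strict inequality of integrals
  have hkey : 2 * (∫ t in (0:ℝ)..1, h t) < (∫ t in (0:ℝ)..1, f t) + ∫ t in (0:ℝ)..1, g t := by
    have hφint : IntervalIntegrable (fun t => f t + g t - 2 * h t) volume 0 1 :=
      (hfint.add hgint).sub (hhint.const_mul 2)
    have hpos : 0 < ∫ t in (0:ℝ)..1, (f t + g t - 2 * h t) := by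
      have hsub : (0:ℝ) < ∫ t in (1/4:ℝ)..(1/3:ℝ), (f t + g t - 2 * h t) := by
        refine intervalIntegral.intervalIntegral_pos_of_pos_on
          (hφint.mono_set ?_) (fun x hx => ?_) (by norm_num)
        · rw [Set.uIcc_of_le (by norm_num), Set.uIcc_of_le (by norm_num)]
          intro x hx; exact ⟨by linarith [hx.1], by linarith [hx.2]⟩
        · have := amgm_lt (t := x) hab (by linarith [hx.1]) (by linarith [hx.2])
          simp only [hf, hg, hh]; linarith
      refine lt_of_lt_of_le hsub ?_
      refine intervalIntegral.integral_mono_interval (by norm_num) (by norm_num) (by norm_num)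
        ?_ hφint
      rw [← Measure.restrict_congr_set Ioo_ae_eq_Ioc]
      refine (ae_restrict_mem measurableSet_Ioo).mono fun x hx => ?_
      have := amgm_le (a := a) (b := b) (t := x) hx.1 hx.2
      simp only [hf, hg, hh, Pi.zero_apply]; linarith
    have heq : (∫ t in (0:ℝ)..1, (f t + g t - 2 * h t))
        = (∫ t in (0:ℝ)..1, f t) + (∫ t in (0:ℝ)..1, g t) - 2 * ∫ t in (0:ℝ)..1, h t := by
      rw [intervalIntegral.integral_sub (hfint.add hgint) (hhint.const_mul 2),
        intervalIntegral.integral_add hfint hgint,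
        intervalIntegral.integral_const_mul]
    linarith [heq ▸ hpos]
  -- assemble via beta_repr
  have h1 : Real.Gamma a * Real.Gamma b = Real.Gamma (a + b) * ∫ t in (0:ℝ)..1, f t :=
    beta_repr ha hb
  have h2 : Real.Gamma ((a+b)/2) * Real.Gamma ((a+b)/2)
      = Real.Gamma (a + b) * ∫ t in (0:ℝ)..1, h t := by
    have := beta_repr hm hm
    rw [show (a+b)/2 + (a+b)/2 = a + b by ring] at this
    exact this
  have hΓpos : 0 < Real.Gamma (a + b) := Real.Gamma_pos_of_pos (by linarith)
  rw [sq, h2, h1]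
  have : (∫ t in (0:ℝ)..1, h t) < ∫ t in (0:ℝ)..1, f t := by
    rw [hrefl] at hkey; linarith
  exact (mul_lt_mul_iff_right₀ hΓpos).mpr this


/-- The constant `C(κ) = Γ(4/κ)Γ(12/κ-1)/(Γ(8/κ)Γ(8/κ-1))`,
the reciprocal of the hypergeometric value `₂F₁(4/κ, 1-4/κ, 8/κ; 1)`. -/
noncomputable def Cconst (κ : ℝ) : ℝ :=
  Real.Gamma (4 / κ) * Real.Gamma (12 / κ - 1) /
    (Real.Gamma (8 / κ) * Real.Gamma (8 / κ - 1))


lemma gamma_prod_lt {a b c d : ℝ} (ha : 0 < a) (hac : a < c) (hcd : c < d) (hdb : d < b)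
    (hsum : a + b = c + d) : Real.Gamma c * Real.Gamma d < Real.Gamma a * Real.Gamma b := by
  have hb : 0 < b := by linarith
  have hc : 0 < c := by linarith
  have hd : 0 < d := by linarith
  have hm : 0 < (a + b) / 2 := by linarith
  set m : ℝ := (a + b) / 2 with hmdef
  set l : ℝ := 1 - (d - c) / (b - a) with hldef
  have hba : 0 < b - a := by linarith
  have hl0 : 0 < l := by
    rw [hldef]
    have : (d - c) / (b - a) < 1 := (div_lt_one hba).mpr (by linarith)
    linarith
  have hl1 : l < 1 := by
    rw [hldef]
    have : 0 < (d - c) / (b - a) := div_pos (by linarith) hba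
    linarith
  obtain rfl : d = a + b - c := by linarith
  have hcrep : c = l * m + (1 - l) * a := by
    rw [hldef, hmdef]; field_simp; ring
  have hdrep : a + b - c = l * m + (1 - l) * b := by
    rw [hldef, hmdef]; field_simp; ring
  have cvx := Real.convexOn_log_Gamma.2
  have hca : Real.log (Real.Gamma c) ≤ l * Real.log (Real.Gamma m) + (1 - l) * Real.log (Real.Gamma a) := by
    have := Real.convexOn_log_Gamma.2 (Set.mem_Ioi.mpr hm) (Set.mem_Ioi.mpr ha)
      hl0.le (by linarith : (0:ℝ) ≤ 1 - l) (by ring)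
    simpa [Function.comp, smul_eq_mul, ← hcrep] using this
  have hdb' : Real.log (Real.Gamma (a+b-c)) ≤ l * Real.log (Real.Gamma m) + (1 - l) * Real.log (Real.Gamma b) := by
    have := Real.convexOn_log_Gamma.2 (Set.mem_Ioi.mpr hm) (Set.mem_Ioi.mpr hb)
      hl0.le (by linarith : (0:ℝ) ≤ 1 - l) (by ring)
    simpa [Function.comp, smul_eq_mul, ← hdrep] using this
  have hmid : 2 * Real.log (Real.Gamma m) < Real.log (Real.Gamma a) + Real.log (Real.Gamma b) := by
    have h1 := gamma_midpoint_lt ha (by linarith : a < b)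
    have h2 : Real.log (Real.Gamma m ^ 2) < Real.log (Real.Gamma a * Real.Gamma b) :=
      Real.log_lt_log (pow_pos (Real.Gamma_pos_of_pos hm) 2) h1
    rwa [Real.log_pow, Real.log_mul (Real.Gamma_pos_of_pos ha).ne'
      (Real.Gamma_pos_of_pos hb).ne', Nat.cast_ofNat] at h2
  have hfin : Real.log (Real.Gamma c * Real.Gamma (a+b-c)) < Real.log (Real.Gamma a * Real.Gamma b) := by
    rw [Real.log_mul (Real.Gamma_pos_of_pos hc).ne' (Real.Gamma_pos_of_pos hd).ne',
      Real.log_mul (Real.Gamma_pos_of_pos ha).ne' (Real.Gamma_pos_of_pos hb).ne']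
    nlinarith [hca, hdb', hmid, hl0]
  have := Real.exp_lt_exp.mpr hfin
  rwa [Real.exp_log (mul_pos (Real.Gamma_pos_of_pos hc) (Real.Gamma_pos_of_pos hd)),
    Real.exp_log (mul_pos (Real.Gamma_pos_of_pos ha) (Real.Gamma_pos_of_pos hb))] at this


theorem stmt_6 :
    (∀ κ : ℝ, 0 < κ → κ < 4 → 1 < Cconst κ) ∧
    Cconst 4 = 1 ∧
    (∀ κ : ℝ, 4 < κ → κ < 8 → 0 < Cconst κ ∧ Cconst κ < 1) ∧
    Cconst 8 = 0 := by
  refine ⟨?_, ?_, ?_, ?_⟩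
  · intro κ hκ0 hκ4
    set x : ℝ := 4 / κ with hx
    have hx1 : 1 < x := (one_lt_div hκ0).mpr hκ4
    have e1 : (12:ℝ) / κ - 1 = 3 * x - 1 := by rw [hx]; ring
    have e2 : (8:ℝ) / κ = 2 * x := by rw [hx]; ring
    have e3 : (8:ℝ) / κ - 1 = 2 * x - 1 := by rw [hx]; ring
    rw [Cconst, e1, e3, e2, ← hx]
    have hlt : Real.Gamma (2*x-1) * Real.Gamma (2*x) < Real.Gamma x * Real.Gamma (3*x-1) :=
      gamma_prod_lt (by linarith) (by linarith) (by linarith) (by linarith) (by ring)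
    have hden : 0 < Real.Gamma (2*x) * Real.Gamma (2*x-1) :=
      mul_pos (Real.Gamma_pos_of_pos (by linarith)) (Real.Gamma_pos_of_pos (by linarith))
    rw [lt_div_iff₀ hden, one_mul]
    linarith [hlt, mul_comm (Real.Gamma (2*x-1)) (Real.Gamma (2*x))]
  · rw [Cconst]
    norm_num [Real.Gamma_one, Real.Gamma_two]
  · intro κ hκ4 hκ8
    have hκ0 : 0 < κ := by linarith
    set x : ℝ := 4 / κ with hx
    have hx1 : x < 1 := (div_lt_one hκ0).mpr hκ4
    have hx2 : 1/2 < x := by rw [hx, lt_div_iff₀ hκ0]; linarith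
    have e1 : (12:ℝ) / κ - 1 = 3 * x - 1 := by rw [hx]; ring
    have e2 : (8:ℝ) / κ = 2 * x := by rw [hx]; ring
    have e3 : (8:ℝ) / κ - 1 = 2 * x - 1 := by rw [hx]; ring
    rw [Cconst, e1, e3, e2, ← hx]
    have hden : 0 < Real.Gamma (2*x) * Real.Gamma (2*x-1) :=
      mul_pos (Real.Gamma_pos_of_pos (by linarith)) (Real.Gamma_pos_of_pos (by linarith))
    have hnum : 0 < Real.Gamma x * Real.Gamma (3*x-1) :=
      mul_pos (Real.Gamma_pos_of_pos (by linarith)) (Real.Gamma_pos_of_pos (by linarith))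
    constructor
    · exact div_pos hnum hden
    · have hlt : Real.Gamma x * Real.Gamma (3*x-1) < Real.Gamma (2*x-1) * Real.Gamma (2*x) :=
        gamma_prod_lt (by linarith) (by linarith) (by linarith) (by linarith) (by ring)
      rw [div_lt_one hden]
      linarith [hlt, mul_comm (Real.Gamma (2*x-1)) (Real.Gamma (2*x))]
  · rw [Cconst]
    norm_num [Real.Gamma_zero]
end

section
/- Gauss's hypergeometric evaluation: for real parameters a, b, c with c > a + b and c not a nonpositive integer, the Gauss hypergeometric series ₂F₁(a,b,c;1) = Σ_{n≥0} (a)ₙ(b)ₙ/((c)ₙ n!) converges and equals Γ(c)Γ(c-a-b)/(Γ(c-a)Γ(c-b)). -/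
open Filter Finset Topology

namespace Gauss7


/-- abbreviation for Pochhammer eval -/
noncomputable def P (n : ℕ) (x : ℝ) : ℝ := (ascPochhammer ℝ n).eval x

lemma P_zero (x : ℝ) : P 0 x = 1 := by simp [P]

lemma P_succ (n : ℕ) (x : ℝ) : P (n+1) x = P n x * (x + n) := by
  simp [P, ascPochhammer_succ_eval]

lemma P_succ_left (n : ℕ) (x : ℝ) : P (n+1) x = x * P n (x+1) := by
  simp only [P, ascPochhammer_succ_left, Polynomial.eval_mul, Polynomial.eval_X,
    Polynomial.eval_comp, Polynomial.eval_add, Polynomial.eval_one]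

lemma P_pos {x : ℝ} (hx : 0 < x) (n : ℕ) : 0 < P n x := ascPochhammer_pos n x hx

lemma P_ne_zero {c : ℝ} (hc : ∀ k : ℕ, c ≠ -(k : ℝ)) (n : ℕ) : P n c ≠ 0 := by
  intro h
  rw [P, ascPochhammer_eval_eq_zero_iff] at h
  obtain ⟨k, _, hk⟩ := h
  exact hc k (by linarith [hk])

lemma P_nonneg {x : ℝ} (hx : 0 ≤ x) (n : ℕ) : 0 ≤ P n x := by
  induction n with
  | zero => simp [P_zero]
  | succ n ih => rw [P_succ]; positivity

lemma abs_P_le (a : ℝ) (n : ℕ) : |P n a| ≤ P n |a| := by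
  induction n with
  | zero => simp [P_zero]
  | succ n ih =>
    rw [P_succ, P_succ, abs_mul]
    apply mul_le_mul ih ((abs_add_le _ _).trans (by simp)) (abs_nonneg _) (P_nonneg (abs_nonneg a) n)

lemma P_mono {x y : ℝ} (hx : 0 < x) (hxy : x ≤ y) (n : ℕ) : P n x ≤ P n y := by
  induction n with
  | zero => simp [P_zero]
  | succ n ih =>
    rw [P_succ, P_succ]
    apply mul_le_mul ih (by linarith) (by positivity) (le_of_lt (P_pos (by linarith) n))

/-- the general term of the hypergeometric series at 1 -/
noncomputable def t (a b c : ℝ) (n : ℕ) : ℝ := P n a * P n b / (P n c * (n.factorial : ℝ))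

lemma t_ratio (a b c : ℝ) (n : ℕ) (h1 : P n c ≠ 0) (h2 : c + n ≠ 0) :
    t a b c (n+1) * ((c + n) * (n+1)) = t a b c n * ((a + n) * (b + n)) := by
  rw [t, t, P_succ, P_succ, P_succ, Nat.factorial_succ]
  push_cast
  field_simp

lemma t_shift (a b c : ℝ) (n : ℕ) (h1 : P n c ≠ 0) (h2 : P n (c+1) ≠ 0) :
    c * t a b c n = c * t a b (c+1) n + n * t a b (c+1) n := by
  have key : c * P n (c+1) = P n c * (c + n) := by
    rw [← P_succ_left, P_succ]
  rw [t, t]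
  field_simp
  linear_combination (P n a * P n b) * key


lemma t_zero (a b c : ℝ) : t a b c 0 = 1 := by simp [t, P_zero]

lemma t_step {a b c s : ℝ} (hs : 0 < s) (h : a + b + s < c + 1) (hc : ∀ n : ℕ, P n c ≠ 0) :
    ∀ᶠ n : ℕ in atTop,
      |t a b c (n+1)| * ((n:ℝ)+1) ^ s ≤ |t a b c n| * (n:ℝ) ^ s := by
  have hε : 0 < c + 1 - s - a - b := by linarith
  obtain ⟨N, hN⟩ := exists_nat_gt (max (max |a| |b|) (max |c| (s+1)) +
      (|c - s*(c+1) - a*b| + |s*c| + 1)/(c+1-s-a-b))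
  filter_upwards [eventually_ge_atTop (N+1)] with n hn
  have hn1 : (1:ℝ) ≤ (n:ℝ) := by exact_mod_cast Nat.one_le_iff_ne_zero.mpr (by omega)
  have hNn : (N:ℝ) ≤ (n:ℝ) := by exact_mod_cast Nat.le_of_succ_le hn
  have hsum : max (max |a| |b|) (max |c| (s+1)) + (|c - s*(c+1) - a*b| + |s*c| + 1)/(c+1-s-a-b) < (n:ℝ) :=
    lt_of_lt_of_le hN hNn
  have hm1 : (0:ℝ) ≤ max (max |a| |b|) (max |c| (s+1)) :=
    le_trans (abs_nonneg a) (le_trans (le_max_left _ _) (le_max_left _ _))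
  have hm2 : (0:ℝ) ≤ (|c - s*(c+1) - a*b| + |s*c| + 1)/(c+1-s-a-b) := by positivity
  have ha : |a| < (n:ℝ) := by
    have h' : |a| ≤ max (max |a| |b|) (max |c| (s+1)) :=
      le_trans (le_max_left _ _) (le_max_left _ _)
    linarith
  have hb : |b| < (n:ℝ) := by
    have h' : |b| ≤ max (max |a| |b|) (max |c| (s+1)) :=
      le_trans (le_max_right _ _) (le_max_left _ _)
    linarith
  have hcn : |c| < (n:ℝ) := by
    have h' : |c| ≤ max (max |a| |b|) (max |c| (s+1)) :=
      le_trans (le_max_left _ _) (le_max_right _ _)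
    linarith
  have hsn : s + 1 < (n:ℝ) := by
    have h' : s + 1 ≤ max (max |a| |b|) (max |c| (s+1)) :=
      le_trans (le_max_right _ _) (le_max_right _ _)
    linarith
  have hdiv : |c - s*(c+1) - a*b| + |s*c| + 1 < (n:ℝ) * (c+1-s-a-b) :=
    (div_lt_iff₀ hε).mp (by linarith)
  -- basic positivity
  have hap : 0 < a + (n:ℝ) := by have := neg_abs_le a; linarith
  have hbp : 0 < b + (n:ℝ) := by have := neg_abs_le b; linarith
  have hcp : 0 < c + (n:ℝ) := by have := neg_abs_le c; linarith
  have hns : 0 < (n:ℝ) - s := by linarith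
  have hnp : (0:ℝ) < (n:ℝ) := by linarith
  -- polynomial inequality
  have hpoly : (a+(n:ℝ))*(b+n)*n ≤ (c+n)*((n:ℝ)+1)*((n:ℝ)-s) := by
    nlinarith [le_abs_self (c - s*(c+1) - a*b), neg_abs_le (c - s*(c+1) - a*b), le_abs_self (s*c), neg_abs_le (s*c),
      mul_lt_mul_of_pos_right hdiv hnp]
  -- rpow inequality : (n+1)^s * (n-s) ≤ n^s * n
  have hrpow : ((n:ℝ)+1) ^ s * ((n:ℝ)-s) ≤ (n:ℝ) ^ s * (n:ℝ) := by
    have h1 : ((n:ℝ)+1) = (n:ℝ) * (1 + 1/(n:ℝ)) := by field_simp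
    have h2 : ((n:ℝ)+1) ^ s = (n:ℝ)^s * (1 + 1/(n:ℝ))^s := by
      rw [h1, Real.mul_rpow (le_of_lt hnp) (by positivity)]
    have h3 : (1 + 1/(n:ℝ))^s ≤ Real.exp (s * (1/(n:ℝ))) := by
      rw [Real.rpow_def_of_pos (by positivity)]
      apply Real.exp_le_exp.2
      have := Real.log_le_sub_one_of_pos (x := 1 + 1/(n:ℝ)) (by positivity)
      have hs' : 0 ≤ s := le_of_lt hs
      nlinarith
    have h4 : Real.exp (s * (1/(n:ℝ))) ≤ 1 / (1 - s * (1/(n:ℝ))) := by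
      apply Real.exp_bound_div_one_sub_of_interval
      · positivity
      · rw [mul_one_div, div_lt_one hnp]; linarith
    have h5 : 1 / (1 - s * (1/(n:ℝ))) = (n:ℝ) / ((n:ℝ) - s) := by
      rw [mul_one_div]
      rw [show 1 - s/(n:ℝ) = ((n:ℝ)-s)/(n:ℝ) by field_simp]
      rw [one_div_div]
    have h6 : (1 + 1/(n:ℝ))^s ≤ (n:ℝ)/((n:ℝ)-s) := by
      rw [← h5]; exact le_trans h3 h4
    rw [h2]
    calc (n:ℝ)^s * (1 + 1/(n:ℝ))^s * ((n:ℝ)-s)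
        ≤ (n:ℝ)^s * ((n:ℝ)/((n:ℝ)-s)) * ((n:ℝ)-s) := by
          apply mul_le_mul_of_nonneg_right _ (le_of_lt hns)
          exact mul_le_mul_of_nonneg_left h6 (by positivity)
      _ = (n:ℝ)^s * (n:ℝ) := by field_simp
  -- the absolute ratio identity
  have hA : |t a b c (n+1)| * ((c+(n:ℝ))*((n:ℝ)+1)) = |t a b c n| * ((a+(n:ℝ))*(b+(n:ℝ))) := by
    have := t_ratio a b c n (hc n) (by linarith)
    have e1 : |t a b c (n+1) * ((c+(n:ℝ))*((n:ℝ)+1))| = |t a b c n * ((a+(n:ℝ))*(b+(n:ℝ)))| := by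
      rw [this]
    rw [abs_mul, abs_mul, abs_mul, abs_mul, abs_of_pos hcp,
      abs_of_pos (show (0:ℝ) < (n:ℝ)+1 by linarith), abs_of_pos hap, abs_of_pos hbp] at e1
    linarith [e1]
  -- combine
  have hfac : 0 < (a+(n:ℝ))*(b+(n:ℝ))*((n:ℝ)-s) := by positivity
  rw [← mul_le_mul_iff_of_pos_right hfac]
  calc |t a b c (n+1)| * ((n:ℝ)+1)^s * ((a+(n:ℝ))*(b+(n:ℝ))*((n:ℝ)-s))
      = (|t a b c (n+1)| * ((a+(n:ℝ))*(b+(n:ℝ)))) * (((n:ℝ)+1)^s * ((n:ℝ)-s)) := by ring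
    _ ≤ (|t a b c (n+1)| * ((a+(n:ℝ))*(b+(n:ℝ)))) * ((n:ℝ)^s * (n:ℝ)) := by
        apply mul_le_mul_of_nonneg_left hrpow (by positivity)
    _ = |t a b c (n+1)| * (n:ℝ)^s * ((a+(n:ℝ))*(b+(n:ℝ))*(n:ℝ)) := by ring
    _ ≤ |t a b c (n+1)| * (n:ℝ)^s * ((c+(n:ℝ))*((n:ℝ)+1)*((n:ℝ)-s)) := by
        apply mul_le_mul_of_nonneg_left hpoly (by positivity)
    _ = (|t a b c (n+1)| * ((c+(n:ℝ))*((n:ℝ)+1))) * ((n:ℝ)^s * ((n:ℝ)-s)) := by ring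
    _ = (|t a b c n| * ((a+(n:ℝ))*(b+(n:ℝ)))) * ((n:ℝ)^s * ((n:ℝ)-s)) := by rw [hA]
    _ = |t a b c n| * (n:ℝ)^s * ((a+(n:ℝ))*(b+(n:ℝ))*((n:ℝ)-s)) := by ring

lemma t_decay {a b c s : ℝ} (hs : 0 < s) (h : a + b + s < c + 1) (hc : ∀ n : ℕ, P n c ≠ 0) :
    ∃ C : ℝ, ∀ᶠ n : ℕ in atTop, |t a b c n| ≤ C * (n:ℝ) ^ (-s) := by
  obtain ⟨N, hN⟩ := eventually_atTop.mp (t_step hs h hc)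
  refine ⟨|t a b c (N+1)| * ((N+1:ℕ):ℝ) ^ s, ?_⟩
  have key : ∀ n : ℕ, N+1 ≤ n → |t a b c n| * (n:ℝ) ^ s ≤ |t a b c (N+1)| * ((N+1:ℕ):ℝ) ^ s := by
    intro n hn
    induction n, hn using Nat.le_induction with
    | base => exact le_refl _
    | succ n hn ih =>
      refine le_trans ?_ ih
      have := hN n (by omega)
      push_cast at this ⊢
      exact this
  filter_upwards [eventually_ge_atTop (N+1)] with n hn
  have hnp : (0:ℝ) < (n:ℝ) := by exact_mod_cast Nat.pos_of_ne_zero (by omega)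
  rw [Real.rpow_neg (le_of_lt hnp), ← div_eq_mul_inv, le_div_iff₀ (Real.rpow_pos_of_pos hnp s)]
  exact key n hn

lemma t_summable {a b c : ℝ} (h : a + b < c) (hc : ∀ n : ℕ, P n c ≠ 0) :
    Summable (t a b c) := by
  obtain ⟨s, hs_def⟩ : ∃ s : ℝ, s = 1 + min (c - a - b) 1 / 2 := ⟨_, rfl⟩
  have hmin : 0 < min (c - a - b) 1 := lt_min (by linarith) one_pos
  have hs : 0 < s := by rw [hs_def]; positivity
  have h2 : a + b + s < c + 1 := by
    have : min (c - a - b) 1 ≤ c - a - b := min_le_left _ _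
    rw [hs_def]; linarith
  obtain ⟨C, hC⟩ := t_decay hs h2 hc
  have hg : Summable (fun n : ℕ => C * (n:ℝ) ^ (-s)) := by
    apply Summable.mul_left
    apply Real.summable_nat_rpow.mpr
    rw [hs_def]; linarith
  apply Summable.of_norm_bounded_eventually hg
  rw [Nat.cofinite_eq_atTop]
  filter_upwards [hC] with n hn using hn

lemma kt_summable {a b c : ℝ} (h : a + b + 1 < c) (hc : ∀ n : ℕ, P n c ≠ 0) :
    Summable (fun n : ℕ => (n:ℝ) * t a b c n) := by
  obtain ⟨s, hs_def⟩ : ∃ s : ℝ, s = 2 + min (c - a - b - 1) 1 / 2 := ⟨_, rfl⟩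
  have hmin : 0 < min (c - a - b - 1) 1 := lt_min (by linarith) one_pos
  have hs : 0 < s := by rw [hs_def]; positivity
  have h2 : a + b + s < c + 1 := by
    have : min (c - a - b - 1) 1 ≤ c - a - b - 1 := min_le_left _ _
    rw [hs_def]; linarith
  obtain ⟨C, hC⟩ := t_decay hs h2 hc
  have hg : Summable (fun n : ℕ => C * (n:ℝ) ^ (1-s)) := by
    apply Summable.mul_left
    apply Real.summable_nat_rpow.mpr
    rw [hs_def]; linarith
  apply Summable.of_norm_bounded_eventually hg
  rw [Nat.cofinite_eq_atTop]
  filter_upwards [hC, eventually_ge_atTop 1] with n hn hn1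
  have hnp : (0:ℝ) < (n:ℝ) := by exact_mod_cast hn1
  have : ‖(n:ℝ) * t a b c n‖ = (n:ℝ) * |t a b c n| := by
    rw [norm_mul, Real.norm_natCast, Real.norm_eq_abs]
  rw [this]
  calc (n:ℝ) * |t a b c n| ≤ (n:ℝ) * (C * (n:ℝ)^(-s)) := by
        apply mul_le_mul_of_nonneg_left hn (le_of_lt hnp)
    _ = C * (n:ℝ)^(1-s) := by
        rw [show (1:ℝ) - s = 1 + (-s) by ring, Real.rpow_add hnp, Real.rpow_one]; ring

lemma t_tail {a b c : ℝ} (h : a + b + 1 < c) (hc : ∀ n : ℕ, P n c ≠ 0) :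
    Tendsto (fun n : ℕ => (n:ℝ) * (c + n) * t a b c n) atTop (𝓝 0) := by
  obtain ⟨s, hs_def⟩ : ∃ s : ℝ, s = 2 + min (c - a - b - 1) 1 / 2 := ⟨_, rfl⟩
  have hmin : 0 < min (c - a - b - 1) 1 := lt_min (by linarith) one_pos
  have hs : 0 < s := by rw [hs_def]; positivity
  have h2 : a + b + s < c + 1 := by
    have : min (c - a - b - 1) 1 ≤ c - a - b - 1 := min_le_left _ _
    rw [hs_def]; linarith
  obtain ⟨C, hC⟩ := t_decay hs h2 hc
  apply squeeze_zero_norm' (a := fun n : ℕ => (2*C) * (n:ℝ) ^ (2-s))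
  · filter_upwards [hC, eventually_ge_atTop 1,
      eventually_gt_atTop (max 1 ⌈|c|⌉₊)] with n hn hn1 hn2
    have hnp : (0:ℝ) < (n:ℝ) := by exact_mod_cast hn1
    have hcn : |c| ≤ (n:ℝ) := by
      calc |c| ≤ (⌈|c|⌉₊ : ℝ) := Nat.le_ceil _
        _ ≤ (n:ℝ) := by exact_mod_cast le_of_lt (lt_of_le_of_lt (le_max_right _ _) hn2)
    have hcpos : 0 ≤ c + (n:ℝ) := by have := neg_abs_le c; linarith
    have hcle : c + (n:ℝ) ≤ 2*(n:ℝ) := by have := le_abs_self c; linarith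
    have habs : 0 ≤ |t a b c n| := abs_nonneg _
    have : ‖(n:ℝ) * (c + n) * t a b c n‖ = (n:ℝ) * (c + n) * |t a b c n| := by
      rw [norm_mul, norm_mul, Real.norm_natCast, Real.norm_eq_abs, Real.norm_eq_abs,
        abs_of_nonneg hcpos]
    rw [this]
    calc (n:ℝ) * (c + n) * |t a b c n| ≤ (n:ℝ) * (2*(n:ℝ)) * (C * (n:ℝ)^(-s)) := by
          apply mul_le_mul (by nlinarith) hn habs (by positivity)
      _ = (2*C) * (n:ℝ)^(2-s) := by
          rw [show (2:ℝ) - s = 1 + 1 + (-s) by ring, Real.rpow_add hnp, Real.rpow_add hnp,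
            Real.rpow_one]
          ring
  · have hlim : Tendsto (fun x : ℝ => x ^ (-(s-2))) atTop (𝓝 0) :=
      tendsto_rpow_neg_atTop (by rw [hs_def]; linarith)
    have := (hlim.comp tendsto_natCast_atTop_atTop).const_mul (2*C)
    simp only [mul_zero] at this
    have heq : (fun n : ℕ => (2*C) * (n:ℝ) ^ (2-s)) =
        fun k : ℕ => 2 * C * ((fun x : ℝ => x ^ (-(s - 2))) ∘ (Nat.cast : ℕ → ℝ)) k := by
      funext k
      simp only [Function.comp_apply]
      norm_num
    rw [heq]
    exact this
lemma succ_not_nonpos {c : ℝ} (hc : ∀ k : ℕ, c ≠ -(k : ℝ)) : ∀ k : ℕ, c + 1 ≠ -(k : ℝ) := by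
  intro k hk
  exact hc (k+1) (by push_cast; linarith)

lemma telescope {a b c : ℝ} (hc : ∀ k : ℕ, c ≠ -(k : ℝ)) :
    ∀ n : ℕ, ∑ k ∈ range n, (((k:ℝ))*(c-a-b) - a*b) * t a b (c+1) k
      = -(n:ℝ)*(c+n)*t a b (c+1) n := by
  have hc1 := succ_not_nonpos hc
  intro n
  induction n with
  | zero => simp
  | succ n ih =>
    rw [Finset.sum_range_succ, ih]
    have hr := t_ratio a b (c+1) n (P_ne_zero hc1 n) (by
      intro hz; exact hc1 n (by linarith))
    push_cast
    linear_combination hr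

lemma S2_eq {a b c : ℝ} (h : a + b < c) (hc : ∀ k : ℕ, c ≠ -(k : ℝ)) :
    (c-a-b) * ∑' k : ℕ, (k:ℝ) * t a b (c+1) k = a*b * ∑' k : ℕ, t a b (c+1) k := by
  have hc1 := succ_not_nonpos hc
  have hP1 := P_ne_zero hc1
  have hS1 : Summable (t a b (c+1)) := t_summable (by linarith) hP1
  have hS2 : Summable (fun k : ℕ => (k:ℝ) * t a b (c+1) k) := kt_summable (by linarith) hP1
  have hf : Summable (fun k : ℕ => ((k:ℝ)*(c-a-b) - a*b) * t a b (c+1) k) := by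
    have := ((hS2.mul_left (c-a-b)).sub (hS1.mul_left (a*b)))
    convert this using 2 with k
    rfl
    ring
  have h1 : Tendsto (fun n => ∑ k ∈ range n, ((k:ℝ)*(c-a-b) - a*b) * t a b (c+1) k)
      atTop (𝓝 (∑' k : ℕ, ((k:ℝ)*(c-a-b) - a*b) * t a b (c+1) k)) :=
    hf.hasSum.tendsto_sum_nat
  have h2 : Tendsto (fun n => ∑ k ∈ range n, ((k:ℝ)*(c-a-b) - a*b) * t a b (c+1) k)
      atTop (𝓝 0) := by
    have ht : Tendsto (fun n : ℕ => (n:ℝ) * ((c+1) + n) * t a b (c+1) n) atTop (𝓝 0) :=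
      t_tail (by linarith) hP1
    have hterm : Tendsto (fun n : ℕ => (n:ℝ) * t a b (c+1) n) atTop (𝓝 0) :=
      hS2.tendsto_atTop_zero
    have : Tendsto (fun n : ℕ => -(n:ℝ)*(c+n)*t a b (c+1) n) atTop (𝓝 0) := by
      have := (ht.sub hterm).neg
      simp only [sub_zero, neg_zero] at this
      convert this using 2 with n
      ring
    exact (funext (telescope hc) : _) ▸ this
  have hzero : ∑' k : ℕ, ((k:ℝ)*(c-a-b) - a*b) * t a b (c+1) k = 0 :=
    tendsto_nhds_unique h1 h2
  have hsplit : ∑' k : ℕ, ((k:ℝ)*(c-a-b) - a*b) * t a b (c+1) k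
      = (c-a-b) * ∑' k : ℕ, (k:ℝ) * t a b (c+1) k - a*b * ∑' k : ℕ, t a b (c+1) k := by
    rw [← tsum_mul_left, ← tsum_mul_left, ← Summable.tsum_sub (hS2.mul_left _) (hS1.mul_left _)]
    congr 1; funext k; ring
  linarith [hsplit ▸ hzero]

lemma contiguous {a b c : ℝ} (h : a + b < c) (hc : ∀ k : ℕ, c ≠ -(k : ℝ)) :
    c * (c-a-b) * ∑' k : ℕ, t a b c k = (c-a) * (c-b) * ∑' k : ℕ, t a b (c+1) k := by
  have hc1 := succ_not_nonpos hc
  have hP := P_ne_zero hc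
  have hP1 := P_ne_zero hc1
  have hS1 : Summable (t a b (c+1)) := t_summable (by linarith) hP1
  have hS2 : Summable (fun k : ℕ => (k:ℝ) * t a b (c+1) k) := kt_summable (by linarith) hP1
  have e1 : c * ∑' k : ℕ, t a b c k
      = c * ∑' k : ℕ, t a b (c+1) k + ∑' k : ℕ, (k:ℝ) * t a b (c+1) k := by
    rw [← tsum_mul_left, ← tsum_mul_left, ← Summable.tsum_add (hS1.mul_left c) hS2]
    congr 1; funext k
    exact t_shift a b c k (hP k) (hP1 k)
  have e2 := S2_eq h hc
  linear_combination (c-a-b) * e1 + e2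

lemma pos_not_nonpos {c : ℝ} (h : 0 < c) : ∀ k : ℕ, c ≠ -(k : ℝ) := by
  intro k hk
  have : (0:ℝ) ≤ k := Nat.cast_nonneg k
  linarith

lemma shift_not_nonpos {c : ℝ} (hc : ∀ k : ℕ, c ≠ -(k : ℝ)) (n : ℕ) :
    ∀ k : ℕ, c + n ≠ -(k : ℝ) := by
  intro k hk
  exact hc (k+n) (by push_cast; linarith)

lemma iterate {a b c : ℝ} (h : a + b < c) (hc : ∀ k : ℕ, c ≠ -(k : ℝ)) (n : ℕ) :
    (∑' k : ℕ, t a b c k) * (P n c * P n (c-a-b))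
      = (P n (c-a) * P n (c-b)) * ∑' k : ℕ, t a b (c + n) k := by
  induction n with
  | zero => simp [P_zero]
  | succ n ih =>
    have hstep := contiguous (a := a) (b := b) (c := c + n)
      (by push_cast; linarith [Nat.cast_nonneg (α := ℝ) n]) (shift_not_nonpos hc n)
    rw [P_succ, P_succ, P_succ, P_succ]
    push_cast
    rw [show c + ((n:ℝ)+1) = (c+(n:ℝ))+1 by ring]
    linear_combination ((c+(n:ℝ))*(c-a-b+(n:ℝ))) * ih
      + (P n (c-a) * P n (c-b)) * hstep

lemma F_tendsto_one {a b c : ℝ} (h : a + b < c) (hc : ∀ k : ℕ, c ≠ -(k : ℝ)) :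
    Tendsto (fun n : ℕ => ∑' k : ℕ, t a b (c + n) k) atTop (𝓝 1) := by
  obtain ⟨n₀, hn₀⟩ := exists_nat_gt (|a| + |b| + 1 - c)
  have hγ : |a| + |b| + 1 < c + (n₀:ℝ) := by linarith
  have hγpos : 0 < c + (n₀:ℝ) := by
    have := abs_nonneg a; have := abs_nonneg b; linarith
  have huP : ∀ n : ℕ, P n (c + (n₀:ℝ)) ≠ 0 := P_ne_zero (pos_not_nonpos hγpos)
  have hu_sum : Summable (t |a| |b| (c + (n₀:ℝ))) := t_summable (by linarith) huP
  have hu1 : Summable (fun k : ℕ => t |a| |b| (c + (n₀:ℝ)) (k+1)) :=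
    (summable_nat_add_iff 1).mpr hu_sum
  have hu_nonneg : ∀ k : ℕ, 0 ≤ t |a| |b| (c + (n₀:ℝ)) k := by
    intro k
    unfold t
    have h1 : 0 ≤ P k |a| := P_nonneg (abs_nonneg a) k
    have h2 : 0 ≤ P k |b| := P_nonneg (abs_nonneg b) k
    have h3 : 0 < P k (c + (n₀:ℝ)) := P_pos hγpos k
    positivity
  set U : ℝ := ∑' k : ℕ, t |a| |b| (c + (n₀:ℝ)) (k+1) with hU
  -- decomposition of the sums
  have hdecomp : ∀ n : ℕ, ∑' k : ℕ, t a b (c + (n:ℝ)) k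
      = 1 + ∑' k : ℕ, t a b (c + (n:ℝ)) (k+1) := by
    intro n
    have hs : Summable (t a b (c + (n:ℝ))) := by
      apply t_summable (by linarith [Nat.cast_nonneg (α := ℝ) n])
      exact P_ne_zero (shift_not_nonpos hc n)
    rw [Summable.tsum_eq_zero_add hs, t_zero]
  have hT : Tendsto (fun n : ℕ => ∑' k : ℕ, t a b (c + (n:ℝ)) (k+1)) atTop (𝓝 0) := by
    apply squeeze_zero_norm' (a := fun n : ℕ => (c + (n₀:ℝ)) * U / (c + (n:ℝ)))
    · filter_upwards [eventually_ge_atTop n₀] with n hn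
      have hnn₀ : (n₀:ℝ) ≤ (n:ℝ) := by exact_mod_cast hn
      have hcn : 0 < c + (n:ℝ) := by linarith
      have hsum_n : Summable (t a b (c + (n:ℝ))) := by
        apply t_summable (by linarith [Nat.cast_nonneg (α := ℝ) n])
        exact P_ne_zero (shift_not_nonpos hc n)
      have hsum_n1 : Summable (fun k : ℕ => t a b (c + (n:ℝ)) (k+1)) :=
        (summable_nat_add_iff 1).mpr hsum_n
      have hbound : ∀ k : ℕ, |t a b (c + (n:ℝ)) (k+1)|
          ≤ (c + (n₀:ℝ))/(c + (n:ℝ)) * t |a| |b| (c + (n₀:ℝ)) (k+1) := by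
        intro k
        have hP1 : 0 < P k (c + (n₀:ℝ) + 1) := P_pos (by linarith) k
        have hP2 : 0 < P k (c + (n:ℝ) + 1) := P_pos (by linarith) k
        have hfac : (0:ℝ) < ((k+1).factorial : ℝ) := by positivity
        have e1 : (c + (n₀:ℝ))/(c + (n:ℝ)) * t |a| |b| (c + (n₀:ℝ)) (k+1)
            = P (k+1) |a| * P (k+1) |b| / ((c + (n:ℝ)) * P k (c + (n₀:ℝ) + 1)
                * ((k+1).factorial : ℝ)) := by
          rw [t, P_succ_left k (c + (n₀:ℝ))]
          field_simp
        rw [e1, t, abs_div, P_succ_left k (c + (n:ℝ))]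
        have hden : |c + (n:ℝ)| * P k (c + (n:ℝ) + 1) * ((k+1).factorial : ℝ)
            = |(c + (n:ℝ)) * P k (c + (n:ℝ) + 1) * (((k+1).factorial : ℕ) : ℝ)| := by
          rw [abs_mul, abs_mul, abs_of_pos hP2, abs_of_nonneg (le_of_lt hfac)]
        calc |P (k+1) a * P (k+1) b| / |(c + (n:ℝ)) * P k (c + (n:ℝ) + 1) * (((k+1).factorial : ℕ) : ℝ)|
            = |P (k+1) a * P (k+1) b| / (|c + (n:ℝ)| * P k (c + (n:ℝ) + 1) * ((k+1).factorial : ℝ)) := by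
              rw [hden]
          _ ≤ (P (k+1) |a| * P (k+1) |b|) / ((c + (n:ℝ)) * P k (c + (n₀:ℝ) + 1) * ((k+1).factorial : ℝ)) := by
              apply div_le_div₀ (mul_nonneg (P_nonneg (abs_nonneg a) _) (P_nonneg (abs_nonneg b) _))
              · rw [abs_mul]
                exact mul_le_mul (abs_P_le a _) (abs_P_le b _) (abs_nonneg _)
                  (P_nonneg (abs_nonneg a) _)
              · positivity
              · rw [abs_of_pos hcn]
                have := P_mono (x := c + (n₀:ℝ) + 1) (y := c + (n:ℝ) + 1) (by linarith) (by linarith) k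
                exact mul_le_mul_of_nonneg_right
                  (mul_le_mul_of_nonneg_left this (le_of_lt hcn)) (le_of_lt hfac)
      calc ‖∑' k : ℕ, t a b (c + (n:ℝ)) (k+1)‖
          ≤ ∑' k : ℕ, ‖t a b (c + (n:ℝ)) (k+1)‖ := norm_tsum_le_tsum_norm (by
            simpa using hsum_n1.abs)
        _ ≤ ∑' k : ℕ, (c + (n₀:ℝ))/(c + (n:ℝ)) * t |a| |b| (c + (n₀:ℝ)) (k+1) := by
            apply Summable.tsum_le_tsum _ (by simpa using hsum_n1.abs) (hu1.mul_left _)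
            intro k
            simpa using hbound k
        _ = (c + (n₀:ℝ)) * U / (c + (n:ℝ)) := by
            rw [tsum_mul_left, ← hU]; ring
    · apply Tendsto.div_atTop tendsto_const_nhds
      exact tendsto_atTop_add_const_left _ c tendsto_natCast_atTop_atTop
  have : Tendsto (fun n : ℕ => 1 + ∑' k : ℕ, t a b (c + (n:ℝ)) (k+1)) atTop (𝓝 1) := by
    have := tendsto_const_nhds (x := (1:ℝ)) (f := atTop (α := ℕ)) |>.add hT
    simpa using this
  exact Tendsto.congr (fun n => (hdecomp n).symm) this
lemma P_eq_prod (n : ℕ) (x : ℝ) : P n x = ∏ j ∈ range n, (x + j) := by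
  induction n with
  | zero => simp [P_zero]
  | succ n ih => rw [P_succ, prod_range_succ, ih]

lemma gammaSeq_eq (s : ℝ) (n : ℕ) :
    Real.GammaSeq s n = (n:ℝ) ^ s * (n.factorial : ℝ) / P (n+1) s := by
  rw [Real.GammaSeq, P_eq_prod]

lemma main {a b c : ℝ} (h : a + b < c) (hc : ∀ k : ℕ, c ≠ -(k : ℝ)) :
    ∑' k : ℕ, t a b c k = Real.Gamma c * Real.Gamma (c - a - b) /
        (Real.Gamma (c - a) * Real.Gamma (c - b)) := by
  have hP := P_ne_zero hc
  have hdpos : 0 < c - a - b := by linarith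
  have hPd : ∀ n : ℕ, P n (c-a-b) ≠ 0 := fun n => ne_of_gt (P_pos hdpos n)
  by_cases hdeg : (∃ m : ℕ, c - a = -(m:ℝ)) ∨ (∃ m : ℕ, c - b = -(m:ℝ))
  · -- degenerate case : sum and RHS are both 0
    have hrhs : Real.Gamma (c-a) * Real.Gamma (c-b) = 0 := by
      rcases hdeg with ⟨m, hm⟩ | ⟨m, hm⟩
      · rw [hm, Real.Gamma_neg_nat_eq_zero, zero_mul]
      · rw [hm, Real.Gamma_neg_nat_eq_zero, mul_zero]
    rw [hrhs, div_zero]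
    -- show the sum is 0
    rcases hdeg with ⟨m, hm⟩ | ⟨m, hm⟩
    · have hzero : P (m+1) (c-a) = 0 := by
        rw [P, hm]; exact ascPochhammer_eval_neg_coe_nat_of_lt (Nat.lt_succ_self m)
      have := iterate h hc (m+1)
      rw [hzero, zero_mul, zero_mul] at this
      have hne : P (m+1) c * P (m+1) (c-a-b) ≠ 0 := mul_ne_zero (hP _) (hPd _)
      exact (mul_eq_zero.mp this).resolve_right hne
    · have hzero : P (m+1) (c-b) = 0 := by
        rw [P, hm]; exact ascPochhammer_eval_neg_coe_nat_of_lt (Nat.lt_succ_self m)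
      have := iterate h hc (m+1)
      rw [hzero, mul_zero, zero_mul] at this
      have hne : P (m+1) c * P (m+1) (c-a-b) ≠ 0 := mul_ne_zero (hP _) (hPd _)
      exact (mul_eq_zero.mp this).resolve_right hne
  · push_neg at hdeg
    obtain ⟨hA, hB⟩ := hdeg
    have hPA : ∀ n : ℕ, P n (c-a) ≠ 0 := P_ne_zero hA
    have hPB : ∀ n : ℕ, P n (c-b) ≠ 0 := P_ne_zero hB
    have hGA : Real.Gamma (c-a) ≠ 0 := Real.Gamma_ne_zero hA
    have hGB : Real.Gamma (c-b) ≠ 0 := Real.Gamma_ne_zero hB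
    -- the ratio sequence
    have hQ : Tendsto (fun n : ℕ => Real.GammaSeq c n * Real.GammaSeq (c-a-b) n /
        (Real.GammaSeq (c-a) n * Real.GammaSeq (c-b) n)) atTop
        (𝓝 (Real.Gamma c * Real.Gamma (c-a-b) / (Real.Gamma (c-a) * Real.Gamma (c-b)))) :=
      ((Real.GammaSeq_tendsto_Gamma c).mul (Real.GammaSeq_tendsto_Gamma (c-a-b))).div
        (((Real.GammaSeq_tendsto_Gamma (c-a)).mul (Real.GammaSeq_tendsto_Gamma (c-b))))
        (mul_ne_zero hGA hGB)
    have hRQ : ∀ᶠ n : ℕ in atTop,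
        Real.GammaSeq c n * Real.GammaSeq (c-a-b) n /
          (Real.GammaSeq (c-a) n * Real.GammaSeq (c-b) n)
        = (P (n+1) (c-a) * P (n+1) (c-b)) / (P (n+1) c * P (n+1) (c-a-b)) := by
      filter_upwards [eventually_ge_atTop 1] with n hn
      have hnp : (0:ℝ) < (n:ℝ) := by exact_mod_cast hn
      have hkey : (n:ℝ)^c * (n:ℝ)^(c-a-b) = (n:ℝ)^(c-a) * (n:ℝ)^(c-b) := by
        rw [← Real.rpow_add hnp, ← Real.rpow_add hnp]
        congr 1; ring
      rw [gammaSeq_eq, gammaSeq_eq, gammaSeq_eq, gammaSeq_eq]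
      have hfac : ((n.factorial : ℕ) : ℝ) ≠ 0 := by positivity
      have hr1 : (n:ℝ)^(c-a) ≠ 0 := ne_of_gt (Real.rpow_pos_of_pos hnp _)
      have hr2 : (n:ℝ)^(c-b) ≠ 0 := ne_of_gt (Real.rpow_pos_of_pos hnp _)
      field_simp [hP (n+1), hPd (n+1), hPA (n+1), hPB (n+1)]
      linear_combination hkey
    -- F c = R n * F (c+n)
    have hFR : ∀ n : ℕ, (∑' k : ℕ, t a b c k)
        = (P n (c-a) * P n (c-b)) / (P n c * P n (c-a-b)) * ∑' k : ℕ, t a b (c + n) k := by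
      intro n
      have hne : P n c * P n (c-a-b) ≠ 0 := mul_ne_zero (hP _) (hPd _)
      rw [div_mul_eq_mul_div, ← iterate h hc n, mul_div_assoc, div_self hne, mul_one]
    have hR : Tendsto (fun n : ℕ => (P n (c-a) * P n (c-b)) / (P n c * P n (c-a-b)))
        atTop (𝓝 (Real.Gamma c * Real.Gamma (c-a-b) / (Real.Gamma (c-a) * Real.Gamma (c-b)))) := by
      apply (tendsto_add_atTop_iff_nat 1).mp
      exact Tendsto.congr' hRQ hQ
    have hprod := hR.mul (F_tendsto_one h hc)
    rw [mul_one] at hprod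
    have hconst : Tendsto (fun _ : ℕ => ∑' k : ℕ, t a b c k) atTop
        (𝓝 (Real.Gamma c * Real.Gamma (c-a-b) / (Real.Gamma (c-a) * Real.Gamma (c-b)))) := by
      apply Tendsto.congr _ hprod
      intro n
      exact (hFR n).symm
    exact tendsto_nhds_unique tendsto_const_nhds hconst


end Gauss7

/-- Gauss's hypergeometric evaluation: for `c > a + b` and `c` not a nonpositive integer,
`₂F₁(a,b,c;1) = Σ_{n≥0} (a)ₙ(b)ₙ/((c)ₙ n!) = Γ(c)Γ(c-a-b)/(Γ(c-a)Γ(c-b))`. -/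
theorem stmt_7 (a b c : ℝ) (h : a + b < c) (hc : ∀ k : ℕ, c ≠ -(k : ℝ)) :
    HasSum (fun n : ℕ =>
        (ascPochhammer ℝ n).eval a * (ascPochhammer ℝ n).eval b /
          ((ascPochhammer ℝ n).eval c * (n.factorial : ℝ)))
      (Real.Gamma c * Real.Gamma (c - a - b) /
        (Real.Gamma (c - a) * Real.Gamma (c - b))) := by
  have hsum : Summable (Gauss7.t a b c) := Gauss7.t_summable h (Gauss7.P_ne_zero hc)
  have hhs := hsum.hasSum
  rw [Gauss7.main h hc] at hhs
  exact hhs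
end

section
/- For κ ∈ (0,8), the four-point pure partition function Z(x₁,x₂,x₃,x₄) = (x₄-x₁)^{-2h}(x₃-x₂)^{-2h} z^{2/κ} ₂F₁(4/κ, 1-4/κ, 8/κ; z) / ₂F₁(4/κ, 1-4/κ, 8/κ; 1), where z = (x₂-x₁)(x₄-x₃)/((x₄-x₂)(x₃-x₁)) is the cross-ratio and h = (6-κ)/(2κ), satisfies the asymptotics lim_{x₂→x₁} Z(x₁,x₂,x₃,x₄)/(x₂-x₁)^{2/κ} = C(κ)·(x₄-x₁)^{-h₁₃}(x₃-x₁)^{-h₁₃}(x₄-x₃)^{2/κ}, where h₁₃ = (8-κ)/κ and C(κ) = 1/₂F₁(4/κ, 1-4/κ, 8/κ; 1). -/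
/-- The Gauss hypergeometric series `₂F₁(a,b,c;x) = Σₙ (a)ₙ(b)ₙ/((c)ₙ n!) xⁿ`. -/
noncomputable def hyp2F1 (a b c x : ℝ) : ℝ :=
  ∑' n : ℕ, (ascPochhammer ℝ n).eval a * (ascPochhammer ℝ n).eval b /
      ((ascPochhammer ℝ n).eval c * (n.factorial : ℝ)) * x ^ n

noncomputable def hypCoef (a b c : ℝ) (n : ℕ) : ℝ :=
  (ascPochhammer ℝ n).eval a * (ascPochhammer ℝ n).eval b /
      ((ascPochhammer ℝ n).eval c * (n.factorial : ℝ))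

lemma hyp_summable (a b c : ℝ) (hc : 0 < c) :
    Summable (fun n : ℕ => |hypCoef a b c n| * (1/2 : ℝ)^n) := by
  apply summable_of_ratio_norm_eventually_le (r := (3/4 : ℝ)) (by norm_num)
  obtain ⟨N, hN⟩ : ∃ N : ℕ, 2 * (|a| + |b| + |a| * |b|) + 1 ≤ N :=
    exists_nat_ge _
  filter_upwards [Filter.eventually_atTop.2 ⟨N, fun n hn => hn⟩] with n hn
  have hcn : (0:ℝ) < (ascPochhammer ℝ n).eval c := ascPochhammer_pos n c hc
  have hfac : (0:ℝ) < (n.factorial : ℝ) := by positivity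
  have hn' : (2 * (|a| + |b| + |a| * |b|) + 1 : ℝ) ≤ n := le_trans hN (by exact_mod_cast hn)
  have key : |a + n| * |b + n| ≤ (3/2) * ((c + n) * (n + 1)) := by
    have h1 : |a + n| ≤ |a| + n := (abs_add_le a n).trans (by rw [Nat.abs_cast])
    have h2 : |b + n| ≤ |b| + n := (abs_add_le b n).trans (by rw [Nat.abs_cast])
    have h3 : (|a| + n) * (|b| + n) ≤ (3/2) * ((c + n) * (n + 1)) := by
      nlinarith [abs_nonneg a, abs_nonneg b, hc, Nat.cast_nonneg (α := ℝ) n,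
        mul_nonneg (abs_nonneg a) (abs_nonneg b)]
    calc |a + n| * |b + n| ≤ (|a| + n) * (|b| + n) := by
          apply mul_le_mul h1 h2 (abs_nonneg _) (by positivity)
      _ ≤ _ := h3
  have hrec : hypCoef a b c (n+1) = hypCoef a b c n * ((a + n) * (b + n) / ((c + n) * (n + 1))) := by
    simp only [hypCoef, ascPochhammer_succ_eval, Nat.factorial_succ, Nat.cast_mul]
    field_simp
    push_cast
    ring
  have hden : (0:ℝ) < (c + n) * (n + 1) := by positivity
  have habs : |(a + n) * (b + n) / ((c + n) * (n + 1))| ≤ 3/2 := by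
    rw [abs_div, abs_mul, abs_of_pos hden, div_le_iff₀ hden]
    linarith [key]
  have e1 : ‖|hypCoef a b c (n+1)| * (1/2:ℝ)^(n+1)‖ = |hypCoef a b c (n+1)| * (1/2:ℝ)^(n+1) :=
    Real.norm_of_nonneg (by positivity)
  have e2 : ‖|hypCoef a b c n| * (1/2:ℝ)^n‖ = |hypCoef a b c n| * (1/2:ℝ)^n :=
    Real.norm_of_nonneg (by positivity)
  rw [e1, e2, hrec, abs_mul, pow_succ]
  nlinarith [habs, abs_nonneg (hypCoef a b c n), abs_nonneg ((a + n) * (b + n) / ((c + n) * (n + 1))),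
    pow_pos (by norm_num : (0:ℝ) < 1/2) n,
    mul_nonneg (abs_nonneg (hypCoef a b c n)) (pow_pos (by norm_num : (0:ℝ) < 1/2) n).le]

lemma hyp2F1_zero (a b c : ℝ) : hyp2F1 a b c 0 = 1 := by
  unfold hyp2F1
  rw [tsum_eq_single 0]
  · simp [ascPochhammer]
  · intro n hn
    simp [zero_pow hn]

lemma hyp2F1_tendsto (a b c : ℝ) (hc : 0 < c) :
    Filter.Tendsto (hyp2F1 a b c) (nhds 0) (nhds 1) := by
  have hcont : ContinuousOn (hyp2F1 a b c) (Metric.closedBall (0:ℝ) (1/2)) := by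
    apply continuousOn_tsum (u := fun n => |hypCoef a b c n| * (1/2:ℝ)^n)
    · intro n
      exact (continuous_const.mul (continuous_pow n)).continuousOn
    · exact hyp_summable a b c hc
    · intro n x hx
      rw [Metric.mem_closedBall, Real.dist_eq, sub_zero] at hx
      rw [Real.norm_eq_abs, abs_mul]
      apply mul_le_mul_of_nonneg_left _ (abs_nonneg _)
      rw [abs_pow]
      exact pow_le_pow_left₀ (abs_nonneg x) hx n
  have h0m : Metric.closedBall (0:ℝ) (1/2) ∈ nhds (0:ℝ) :=
    Metric.closedBall_mem_nhds 0 (by norm_num)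
  have := hcont.continuousAt h0m
  rw [ContinuousAt, hyp2F1_zero] at this
  exact this

/-- For `κ ∈ (0,8)` and `x₁ < x₃ < x₄`, the four-point pure partition function
`Z(x₁,x₂,x₃,x₄) = (x₄-x₁)^{-2h}(x₃-x₂)^{-2h} z^{2/κ} ₂F₁(4/κ,1-4/κ,8/κ;z)/₂F₁(…;1)`
(with `z` the cross-ratio and `h = (6-κ)/(2κ)`) satisfies
`lim_{x₂→x₁} Z/(x₂-x₁)^{2/κ} = C(κ)·(x₄-x₁)^{-h₁₃}(x₃-x₁)^{-h₁₃}(x₄-x₃)^{2/κ}`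
where `h₁₃ = (8-κ)/κ` and `C(κ) = 1/₂F₁(4/κ,1-4/κ,8/κ;1)`. -/
theorem stmt_15 (κ : ℝ) (h0 : 0 < κ) (h8 : κ < 8)
    (x₁ x₃ x₄ : ℝ) (h13 : x₁ < x₃) (h34 : x₃ < x₄) :
    Filter.Tendsto (fun x₂ : ℝ =>
      ((x₄ - x₁) ^ (-(2 * ((6 - κ) / (2 * κ)))) * (x₃ - x₂) ^ (-(2 * ((6 - κ) / (2 * κ)))) *
        ((x₂ - x₁) * (x₄ - x₃) / ((x₄ - x₂) * (x₃ - x₁))) ^ (2 / κ) *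
        (hyp2F1 (4 / κ) (1 - 4 / κ) (8 / κ)
            ((x₂ - x₁) * (x₄ - x₃) / ((x₄ - x₂) * (x₃ - x₁))) /
          hyp2F1 (4 / κ) (1 - 4 / κ) (8 / κ) 1)) / (x₂ - x₁) ^ (2 / κ))
      (nhdsWithin x₁ (Set.Ioo x₁ x₃))
      (nhds ((1 / hyp2F1 (4 / κ) (1 - 4 / κ) (8 / κ) 1) *
        ((x₄ - x₁) ^ (-((8 - κ) / κ)) * (x₃ - x₁) ^ (-((8 - κ) / κ)) *
          (x₄ - x₃) ^ (2 / κ)))) := by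
  set p := -(2 * ((6 - κ) / (2 * κ))) with hp
  set e := 2 / κ with he
  set F : ℝ := hyp2F1 (4 / κ) (1 - 4 / κ) (8 / κ) 1 with hF
  have hA : (0:ℝ) < x₄ - x₁ := by linarith
  have hB : (0:ℝ) < x₃ - x₁ := by linarith
  have hD : (0:ℝ) < x₄ - x₃ := by linarith
  -- the simplified function
  set g : ℝ → ℝ := fun x₂ =>
    (x₄ - x₁) ^ p * (x₃ - x₂) ^ p *
      ((x₄ - x₃) / ((x₄ - x₂) * (x₃ - x₁))) ^ e *
      (hyp2F1 (4 / κ) (1 - 4 / κ) (8 / κ)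
          ((x₂ - x₁) * (x₄ - x₃) / ((x₄ - x₂) * (x₃ - x₁))) / F) with hg
  have heq : ∀ x₂ ∈ Set.Ioo x₁ x₃,
      ((x₄ - x₁) ^ p * (x₃ - x₂) ^ p *
        ((x₂ - x₁) * (x₄ - x₃) / ((x₄ - x₂) * (x₃ - x₁))) ^ e *
        (hyp2F1 (4 / κ) (1 - 4 / κ) (8 / κ)
            ((x₂ - x₁) * (x₄ - x₃) / ((x₄ - x₂) * (x₃ - x₁))) / F)) / (x₂ - x₁) ^ e
      = g x₂ := by
    intro x₂ hx
    obtain ⟨hx1, hx3⟩ := hx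
    have hu : (0:ℝ) < x₂ - x₁ := by linarith
    have h42 : (0:ℝ) < x₄ - x₂ := by linarith
    have hw : (0:ℝ) < (x₄ - x₃) / ((x₄ - x₂) * (x₃ - x₁)) := by positivity
    have hz : (x₂ - x₁) * (x₄ - x₃) / ((x₄ - x₂) * (x₃ - x₁))
        = (x₂ - x₁) * ((x₄ - x₃) / ((x₄ - x₂) * (x₃ - x₁))) := by ring
    have hue : (x₂ - x₁) ^ e ≠ 0 := (Real.rpow_pos_of_pos hu e).ne'
    rw [hg]
    rw [hz, Real.mul_rpow hu.le hw.le, div_eq_iff hue]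
    ring
  have hc : (0:ℝ) < 8 / κ := by positivity
  -- limit of g
  have hzlim : Filter.Tendsto
      (fun x₂ : ℝ => (x₂ - x₁) * (x₄ - x₃) / ((x₄ - x₂) * (x₃ - x₁)))
      (nhdsWithin x₁ (Set.Ioo x₁ x₃)) (nhds 0) := by
    have hcont : ContinuousAt
        (fun x₂ : ℝ => (x₂ - x₁) * (x₄ - x₃) / ((x₄ - x₂) * (x₃ - x₁))) x₁ := by
      apply ContinuousAt.div (by fun_prop) (by fun_prop)
      show (x₄ - x₁) * (x₃ - x₁) ≠ 0
      positivity
    have := hcont.continuousWithinAt (s := Set.Ioo x₁ x₃)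
    simpa using this.tendsto
  have hHlim : Filter.Tendsto
      (fun x₂ : ℝ => hyp2F1 (4 / κ) (1 - 4 / κ) (8 / κ)
          ((x₂ - x₁) * (x₄ - x₃) / ((x₄ - x₂) * (x₃ - x₁))))
      (nhdsWithin x₁ (Set.Ioo x₁ x₃)) (nhds 1) :=
    (hyp2F1_tendsto _ _ _ hc).comp hzlim
  have hPlim : Filter.Tendsto (fun x₂ : ℝ => (x₃ - x₂) ^ p)
      (nhdsWithin x₁ (Set.Ioo x₁ x₃)) (nhds ((x₃ - x₁) ^ p)) := by
    have hcont : ContinuousAt (fun x₂ : ℝ => (x₃ - x₂) ^ p) x₁ := by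
      apply ContinuousAt.rpow_const (by fun_prop)
      left; show x₃ - x₁ ≠ 0; positivity
    exact hcont.continuousWithinAt.tendsto
  have hWlim : Filter.Tendsto (fun x₂ : ℝ => ((x₄ - x₃) / ((x₄ - x₂) * (x₃ - x₁))) ^ e)
      (nhdsWithin x₁ (Set.Ioo x₁ x₃))
      (nhds (((x₄ - x₃) / ((x₄ - x₁) * (x₃ - x₁))) ^ e)) := by
    have hcont : ContinuousAt (fun x₂ : ℝ => ((x₄ - x₃) / ((x₄ - x₂) * (x₃ - x₁))) ^ e) x₁ := by
      apply ContinuousAt.rpow_const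
      · apply ContinuousAt.div (by fun_prop) (by fun_prop)
        show (x₄ - x₁) * (x₃ - x₁) ≠ 0
        positivity
      · left
        show (x₄ - x₃) / ((x₄ - x₁) * (x₃ - x₁)) ≠ 0
        positivity
    exact hcont.continuousWithinAt.tendsto
  have hglim : Filter.Tendsto g (nhdsWithin x₁ (Set.Ioo x₁ x₃))
      (nhds ((x₄ - x₁) ^ p * (x₃ - x₁) ^ p *
        ((x₄ - x₃) / ((x₄ - x₁) * (x₃ - x₁))) ^ e * (1 / F))) := by
    exact ((((tendsto_const_nhds (x := (x₄ - x₁) ^ p)).mul hPlim).mul hWlim).mul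
      (hHlim.div_const F)).congr (fun x => by rw [hg])
  -- identify the limit value
  have hval : (x₄ - x₁) ^ p * (x₃ - x₁) ^ p *
        ((x₄ - x₃) / ((x₄ - x₁) * (x₃ - x₁))) ^ e * (1 / F)
      = (1 / F) * ((x₄ - x₁) ^ (-((8 - κ) / κ)) * (x₃ - x₁) ^ (-((8 - κ) / κ)) *
          (x₄ - x₃) ^ e) := by
    have h1 : (x₄ - x₁) ^ (-((8 - κ) / κ)) = (x₄ - x₁) ^ p * ((x₄ - x₁) ^ e)⁻¹ := by
      rw [← Real.rpow_neg hA.le, ← Real.rpow_add hA]; congr 1; rw [hp, he]; field_simp; ring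
    have h2 : (x₃ - x₁) ^ (-((8 - κ) / κ)) = (x₃ - x₁) ^ p * ((x₃ - x₁) ^ e)⁻¹ := by
      rw [← Real.rpow_neg hB.le, ← Real.rpow_add hB]; congr 1; rw [hp, he]; field_simp; ring
    have hdiv : ((x₄ - x₃) / ((x₄ - x₁) * (x₃ - x₁))) ^ e
        = (x₄ - x₃) ^ e * (((x₄ - x₁) ^ e)⁻¹ * ((x₃ - x₁) ^ e)⁻¹) := by
      rw [Real.div_rpow hD.le (by positivity), Real.mul_rpow hA.le hB.le,
        div_eq_mul_inv, mul_inv]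
    rw [hdiv, h1, h2]
    ring
  rw [← hval]
  refine hglim.congr' ?_
  filter_upwards [self_mem_nhdsWithin] with x₂ hx
  exact (heq x₂ hx).symm
end
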